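/- Fix θ > 0, Δt > 0, Σ ∈ ℝ^{m×d} with ΣΣᵀ positive definite, A ∈ ℝ^{m×n}, a ∈ ℝ^m, Ξ ∈ ℝ^d, Λ ∈ ℝ^{n×d}, b ∈ ℝ^n, B̃ ∈ ℝ^{n×n}, a symmetric matrix P ∈ ℝ^{n×n}, p ∈ ℝ^n, a symmetric positive definite Ψ ∈ ℝ^{m×m}, and x ∈ ℝ^n. Set 𝒜 := ΛᵀPΛΔt − I_d, assume 𝒜 is negative definite, set ℬ := θΣᵀ(ΣΣᵀ)⁻¹Σ − 𝒜, define F(h,γ,η) := (θ/2)(h+η)ᵀΣΣᵀ(h+η)Δt − θ(h+η)ᵀ(a+Ax)Δt − θ((h+η)ᵀΣ − Ξᵀ)γΔt + (1/2)γᵀ𝒜γΔt + γᵀΛᵀ(P(bΔt+B̃x)+p)Δt − (1/2)ηᵀΨ⁻¹η, and let (h*, γ*, 0) be its unique stationary point, with γ* = ℬ⁻¹(−θΣᵀ(ΣΣᵀ)⁻¹(a+Ax) + ΛᵀP(bΔt+B̃x) + Λᵀp + θΞ) and h* = (ΣΣᵀ)⁻¹[(I_m − θΣℬ⁻¹Σᵀ(ΣΣᵀ)⁻¹)(a+Ax)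 + Σℬ⁻¹(ΛᵀP(bΔt+B̃x) + Λᵀp + θΞ)]. Then F(h*, γ*, 0) = (1/2)xᵀ𝔔x + xᵀ𝔮 + 𝔩, where 𝔔 := −θAᵀ(ΣΣᵀ)⁻¹AΔt + θ²Aᵀ(ΣΣᵀ)⁻¹Σℬ⁻¹Σᵀ(ΣΣᵀ)⁻¹AΔt − 2θAᵀ(ΣΣᵀ)⁻¹Σℬ⁻¹ΛᵀPB̃Δt + B̃ᵀPΛℬ⁻¹ΛᵀPB̃Δt, 𝔮 := −θAᵀ(ΣΣᵀ)⁻¹aΔt + (−θAᵀ(ΣΣᵀ)⁻¹Σ + B̃ᵀPΛ)·ℬ⁻¹·(−θΣᵀ(ΣΣᵀ)⁻¹a + Λᵀ(PbΔt + p) + θΞ)·Δt, and 𝔩 := −(θ/2)aᵀ(ΣΣᵀ)⁻¹aΔt + (1/2)(−θaᵀ(ΣΣᵀ)⁻¹Σ + bᵀPΛΔt + pᵀΛ + θΞᵀ)·ℬ⁻¹·(−θΣᵀ(ΣΣᵀ)⁻¹a + ΛᵀPbΔt + Λᵀp + θΞ)·Δt. -/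

import Mathlib

open Matrix

/-- The control-dependent part `F` of the one-step Hamiltonian of the
relative-entropy-penalized stochastic game, with `𝒜 = ΛᵀPΛΔt − I_d`:
`F(h,γ,η) = (θ/2)(h+η)ᵀΣΣᵀ(h+η)Δt − θ(h+η)ᵀ(a+Ax)Δt − θ((h+η)ᵀΣ − Ξᵀ)γΔt
  + (1/2)γᵀ𝒜γΔt + γᵀΛᵀ(P(bΔt+B̃x)+p)Δt − (1/2)ηᵀΨ⁻¹η`. -/
noncomputable def FFun {m n d : ℕ} (θ Δt : ℝ) (S : Matrix (Fin m) (Fin d) ℝ)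
    (A : Matrix (Fin m) (Fin n) ℝ) (a : Fin m → ℝ) (Ξ : Fin d → ℝ)
    (Λ : Matrix (Fin n) (Fin d) ℝ) (b : Fin n → ℝ) (Bt : Matrix (Fin n) (Fin n) ℝ)
    (P : Matrix (Fin n) (Fin n) ℝ) (p : Fin n → ℝ) (Ψ : Matrix (Fin m) (Fin m) ℝ)
    (x : Fin n → ℝ) (h : Fin m → ℝ) (γ : Fin d → ℝ) (η : Fin m → ℝ) : ℝ :=
  (θ / 2) * ((h + η) ⬝ᵥ ((S * Sᵀ) *ᵥ (h + η))) * Δt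
    - θ * ((h + η) ⬝ᵥ (a + A *ᵥ x)) * Δt
    - θ * (((Sᵀ *ᵥ (h + η)) - Ξ) ⬝ᵥ γ) * Δt
    + (1 / 2 : ℝ) * (γ ⬝ᵥ ((Δt • (Λᵀ * P * Λ) - 1) *ᵥ γ)) * Δt
    + (γ ⬝ᵥ (Λᵀ *ᵥ (P *ᵥ (Δt • b + Bt *ᵥ x) + p))) * Δt
    - (1 / 2 : ℝ) * (η ⬝ᵥ (Ψ⁻¹ *ᵥ η))

/-- `ℬ = θΣᵀ(ΣΣᵀ)⁻¹Σ − 𝒜` with `𝒜 = ΛᵀPΛΔt − I_d`. -/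
noncomputable def calB {m n d : ℕ} (θ Δt : ℝ) (S : Matrix (Fin m) (Fin d) ℝ)
    (Λ : Matrix (Fin n) (Fin d) ℝ) (P : Matrix (Fin n) (Fin n) ℝ) :
    Matrix (Fin d) (Fin d) ℝ :=
  θ • (Sᵀ * (S * Sᵀ)⁻¹ * S) - (Δt • (Λᵀ * P * Λ) - 1)


private lemma dot_mv {k l : ℕ} (N : Matrix (Fin k) (Fin l) ℝ) (y : Fin k → ℝ) (z : Fin l → ℝ) :
    y ⬝ᵥ (N *ᵥ z) = (Nᵀ *ᵥ y) ⬝ᵥ z := by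
  rw [Matrix.dotProduct_mulVec, Matrix.mulVec_transpose]

private lemma mv_dot {k l : ℕ} (N : Matrix (Fin k) (Fin l) ℝ) (y : Fin l → ℝ) (z : Fin k → ℝ) :
    (N *ᵥ y) ⬝ᵥ z = y ⬝ᵥ (Nᵀ *ᵥ z) := by
  rw [dotProduct_comm, dot_mv, dotProduct_comm]

private lemma dot_symm {k : ℕ} {N : Matrix (Fin k) (Fin k) ℝ} (hN : Nᵀ = N)
    (y z : Fin k → ℝ) : y ⬝ᵥ (N *ᵥ z) = z ⬝ᵥ (N *ᵥ y) := by
  rw [dot_mv, hN, dotProduct_comm]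

/-- At its saddle point `(h*, γ*, 0)`, the quadratic function `F` has the explicit
quadratic representation `F(h*,γ*,0) = (1/2)xᵀ𝔔x + xᵀ𝔮 + 𝔩`. -/
theorem F_at_saddle_quadratic_representation {m n d : ℕ} (θ Δt : ℝ) (hθ : 0 < θ)
    (hΔt : 0 < Δt)
    (S : Matrix (Fin m) (Fin d) ℝ) (hS : (S * Sᵀ).PosDef)
    (A : Matrix (Fin m) (Fin n) ℝ) (a : Fin m → ℝ) (Ξ : Fin d → ℝ)
    (Λ : Matrix (Fin n) (Fin d) ℝ) (b : Fin n → ℝ) (Bt : Matrix (Fin n) (Fin n) ℝ)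
    (P : Matrix (Fin n) (Fin n) ℝ) (hP : P.IsSymm) (p : Fin n → ℝ)
    (Ψ : Matrix (Fin m) (Fin m) ℝ) (hΨ : Ψ.PosDef) (x : Fin n → ℝ)
    (h𝒜 : (-(Δt • (Λᵀ * P * Λ) - (1 : Matrix (Fin d) (Fin d) ℝ))).PosDef) :
    FFun θ Δt S A a Ξ Λ b Bt P p Ψ x
      -- h*
      ((S * Sᵀ)⁻¹ *ᵥ
        (((1 : Matrix (Fin m) (Fin m) ℝ)
            - θ • (S * (calB θ Δt S Λ P)⁻¹ * Sᵀ * (S * Sᵀ)⁻¹)) *ᵥ (a + A *ᵥ x)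
          + (S * (calB θ Δt S Λ P)⁻¹) *ᵥ
              (Λᵀ *ᵥ (P *ᵥ (Δt • b + Bt *ᵥ x)) + Λᵀ *ᵥ p + θ • Ξ)))
      -- γ*
      ((calB θ Δt S Λ P)⁻¹ *ᵥ
        ((-θ) • (Sᵀ *ᵥ ((S * Sᵀ)⁻¹ *ᵥ (a + A *ᵥ x)))
          + Λᵀ *ᵥ (P *ᵥ (Δt • b + Bt *ᵥ x)) + Λᵀ *ᵥ p + θ • Ξ))
      -- η* = 0
      0
    = (1 / 2 : ℝ) * (x ⬝ᵥ
        (((-(θ * Δt)) • (Aᵀ * (S * Sᵀ)⁻¹ * A)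
          + (θ ^ 2 * Δt) •
              (Aᵀ * (S * Sᵀ)⁻¹ * S * (calB θ Δt S Λ P)⁻¹ * Sᵀ * (S * Sᵀ)⁻¹ * A)
          - (2 * θ * Δt) •
              (Aᵀ * (S * Sᵀ)⁻¹ * S * (calB θ Δt S Λ P)⁻¹ * Λᵀ * P * Bt)
          + Δt • (Btᵀ * P * Λ * (calB θ Δt S Λ P)⁻¹ * Λᵀ * P * Bt)) *ᵥ x))
      + x ⬝ᵥ
        ((-(θ * Δt)) • (Aᵀ *ᵥ ((S * Sᵀ)⁻¹ *ᵥ a))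
          + Δt • ((((-θ) • (Aᵀ * (S * Sᵀ)⁻¹ * S)) + Btᵀ * P * Λ) *ᵥ
              ((calB θ Δt S Λ P)⁻¹ *ᵥ
                ((-θ) • (Sᵀ *ᵥ ((S * Sᵀ)⁻¹ *ᵥ a))
                  + Λᵀ *ᵥ (Δt • (P *ᵥ b) + p) + θ • Ξ))))
      + ((-(θ / 2)) * (a ⬝ᵥ ((S * Sᵀ)⁻¹ *ᵥ a)) * Δt
          + (1 / 2 : ℝ) *
            (((-θ) • (a ᵥ* ((S * Sᵀ)⁻¹ * S)) + Δt • (b ᵥ* (P * Λ)) + (p ᵥ* Λ) + θ • Ξ) ⬝ᵥ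
              ((calB θ Δt S Λ P)⁻¹ *ᵥ
                ((-θ) • (Sᵀ *ᵥ ((S * Sᵀ)⁻¹ *ᵥ a))
                  + Δt • (Λᵀ *ᵥ (P *ᵥ b)) + Λᵀ *ᵥ p + θ • Ξ))) * Δt) := by
  classical
  -- basic facts about (S * Sᵀ)⁻¹
  have hGdet : IsUnit (S * Sᵀ).det := hS.det_pos.ne'.isUnit
  have hGM : (S * Sᵀ) * (S * Sᵀ)⁻¹ = 1 := Matrix.mul_nonsing_inv _ hGdet
  have hGT : (S * Sᵀ)ᵀ = S * Sᵀ := by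
    rw [Matrix.transpose_mul, Matrix.transpose_transpose]
  have hMT : ((S * Sᵀ)⁻¹)ᵀ = (S * Sᵀ)⁻¹ := by
    rw [Matrix.transpose_nonsing_inv, hGT]
  -- positive definiteness of calB
  have hMpd : ((S * Sᵀ)⁻¹).PosDef := hS.inv
  have hSMS : (Sᵀ * (S * Sᵀ)⁻¹ * S).PosSemidef := by
    have h1 := hMpd.posSemidef.conjTranspose_mul_mul_same S
    rwa [Matrix.conjTranspose_eq_transpose_of_trivial] at h1
  have hsmul : (θ • (Sᵀ * (S * Sᵀ)⁻¹ * S)).PosSemidef := by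
    refine ⟨?_, ?_⟩
    · have h1 := hSMS.1
      simpa [Matrix.IsHermitian, Matrix.conjTranspose_smul] using
        congrArg (fun X => θ • X) h1
    · intro y
      have h2 := hSMS.2 y
      exact (hSMS.smul hθ.le).2 y
  have hBpd : (calB θ Δt S Λ P).PosDef := by
    have hEq : calB θ Δt S Λ P
        = θ • (Sᵀ * (S * Sᵀ)⁻¹ * S) + -(Δt • (Λᵀ * P * Λ) - 1) := by
      rw [calB, sub_eq_add_neg]
    rw [hEq]
    exact Matrix.PosDef.posSemidef_add hsmul h𝒜
  have hBdet : IsUnit (calB θ Δt S Λ P).det := hBpd.det_pos.ne'.isUnit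
  have hBBi : calB θ Δt S Λ P * (calB θ Δt S Λ P)⁻¹ = 1 :=
    Matrix.mul_nonsing_inv _ hBdet
  have hBT : (calB θ Δt S Λ P)ᵀ = calB θ Δt S Λ P := by
    have h1 := hBpd.isHermitian
    rwa [Matrix.IsHermitian, Matrix.conjTranspose_eq_transpose_of_trivial] at h1
  have hBiT : ((calB θ Δt S Λ P)⁻¹)ᵀ = (calB θ Δt S Λ P)⁻¹ := by
    rw [Matrix.transpose_nonsing_inv, hBT]
  set M : Matrix (Fin m) (Fin m) ℝ := (S * Sᵀ)⁻¹ with hMdef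
  set B : Matrix (Fin d) (Fin d) ℝ := calB θ Δt S Λ P with hBdef
  set Bi : Matrix (Fin d) (Fin d) ℝ := B⁻¹ with hBidef
  set c : Fin m → ℝ := a + A *ᵥ x with hcdef
  set v : Fin d → ℝ := (-θ) • (Sᵀ *ᵥ (M *ᵥ c)) + Λᵀ *ᵥ (P *ᵥ (Δt • b + Bt *ᵥ x))
      + Λᵀ *ᵥ p + θ • Ξ with hvdef
  set γ : Fin d → ℝ := Bi *ᵥ v with hγdef
  clear_value M B Bi c v γ
  -- rewrite the h* argument
  have harg : ((1 : Matrix (Fin m) (Fin m) ℝ) - θ • (S * Bi * Sᵀ * M)) *ᵥ c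
      + (S * Bi) *ᵥ (Λᵀ *ᵥ (P *ᵥ (Δt • b + Bt *ᵥ x)) + Λᵀ *ᵥ p + θ • Ξ)
      = c + S *ᵥ γ := by
    rw [hγdef, hvdef]
    simp only [Matrix.sub_mulVec, Matrix.smul_mulVec, Matrix.one_mulVec,
      ← Matrix.mulVec_mulVec, Matrix.mulVec_add, Matrix.mulVec_smul,
      Matrix.mulVec_neg, neg_smul, smul_neg]
    module
  rw [harg]
  have hBv : ∀ y : Fin d → ℝ, B *ᵥ (Bi *ᵥ y) = y := by
    intro y
    rw [Matrix.mulVec_mulVec, hBBi, Matrix.one_mulVec]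
  trans Δt * (-(θ / 2) * (c ⬝ᵥ (M *ᵥ c)) + (1 / 2 : ℝ) * (v ⬝ᵥ (Bi *ᵥ v)))
  · -- value of F at the saddle point
    simp only [FFun, add_zero, Matrix.mulVec_zero, dotProduct_zero,
      zero_dotProduct, mul_zero, sub_zero]
    rw [← hcdef]
    set u : Fin m → ℝ := c + S *ᵥ γ with hudef
    clear_value u
    have e0 : (S * Sᵀ) *ᵥ (M *ᵥ u) = u := by
      rw [Matrix.mulVec_mulVec, hGM, Matrix.one_mulVec]
    rw [e0]
    have q1 : (M *ᵥ u) ⬝ᵥ u = u ⬝ᵥ (M *ᵥ u) := dotProduct_comm _ _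
    have q2 : (M *ᵥ u) ⬝ᵥ c = c ⬝ᵥ (M *ᵥ u) := dotProduct_comm _ _
    have q3 : (Sᵀ *ᵥ (M *ᵥ u) - Ξ) ⬝ᵥ γ = (M *ᵥ u) ⬝ᵥ (S *ᵥ γ) - Ξ ⬝ᵥ γ := by
      rw [sub_dotProduct, mv_dot, Matrix.transpose_transpose]
    have hQraw : Δt • (Λᵀ * P * Λ) - (1 : Matrix (Fin d) (Fin d) ℝ)
        = θ • (Sᵀ * M * S) - B := by
      rw [hBdef, calB, hMdef, sub_sub_cancel]
    have q4 : γ ⬝ᵥ ((Δt • (Λᵀ * P * Λ) - 1) *ᵥ γ)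
        = θ * ((S *ᵥ γ) ⬝ᵥ (M *ᵥ (S *ᵥ γ))) - γ ⬝ᵥ v := by
      rw [hQraw, Matrix.sub_mulVec, dotProduct_sub, Matrix.smul_mulVec,
        dotProduct_smul, smul_eq_mul]
      congr 1
      · congr 1
        rw [← Matrix.mulVec_mulVec, ← Matrix.mulVec_mulVec, dot_mv,
          Matrix.transpose_transpose]
      · rw [hγdef, hBv]
    have q5 : γ ⬝ᵥ (Λᵀ *ᵥ (P *ᵥ (Δt • b + Bt *ᵥ x) + p))
        = γ ⬝ᵥ v + θ * (c ⬝ᵥ (M *ᵥ (S *ᵥ γ))) - θ * (Ξ ⬝ᵥ γ) := by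
      rw [hvdef]
      have sw1 : γ ⬝ᵥ (Sᵀ *ᵥ (M *ᵥ c)) = c ⬝ᵥ (M *ᵥ (S *ᵥ γ)) := by
        rw [dot_mv, Matrix.transpose_transpose, dot_symm hMT]
      simp only [Matrix.mulVec_add, dotProduct_add, dotProduct_smul, smul_eq_mul,
        neg_mul, sw1, dotProduct_comm γ Ξ]
      ring
    rw [q1, q2, q3, q4, q5]
    have q6 : (M *ᵥ u) ⬝ᵥ (S *ᵥ γ)
        = c ⬝ᵥ (M *ᵥ (S *ᵥ γ)) + (S *ᵥ γ) ⬝ᵥ (M *ᵥ (S *ᵥ γ)) := by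
      rw [dotProduct_comm, hudef, Matrix.mulVec_add, dotProduct_add,
        dot_symm hMT (S *ᵥ γ) c]
    have q7 : u ⬝ᵥ (M *ᵥ u) = c ⬝ᵥ (M *ᵥ c) + 2 * (c ⬝ᵥ (M *ᵥ (S *ᵥ γ)))
        + (S *ᵥ γ) ⬝ᵥ (M *ᵥ (S *ᵥ γ)) := by
      rw [hudef, Matrix.mulVec_add, add_dotProduct, dotProduct_add, dotProduct_add,
        dot_symm hMT (S *ᵥ γ) c]
      ring
    have q8 : c ⬝ᵥ (M *ᵥ u) = c ⬝ᵥ (M *ᵥ c) + c ⬝ᵥ (M *ᵥ (S *ᵥ γ)) := by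
      rw [hudef, Matrix.mulVec_add, dotProduct_add]
    have q9 : v ⬝ᵥ (Bi *ᵥ v) = γ ⬝ᵥ v := by
      rw [hγdef, dotProduct_comm]
    rw [q6, q7, q8, q9]
    ring
  · -- matching the explicit quadratic representation
    have hPT : Pᵀ = P := hP
    have hz1 : ∀ w : Fin d → ℝ, (Sᵀ *ᵥ (M *ᵥ (A *ᵥ x))) ⬝ᵥ w
        = x ⬝ᵥ (Aᵀ *ᵥ (M *ᵥ (S *ᵥ w))) := by
      intro w
      rw [mv_dot, Matrix.transpose_transpose, mv_dot, hMT, mv_dot]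
    have hz2 : ∀ w : Fin d → ℝ, (Λᵀ *ᵥ (P *ᵥ (Bt *ᵥ x))) ⬝ᵥ w
        = x ⬝ᵥ (Btᵀ *ᵥ (P *ᵥ (Λ *ᵥ w))) := by
      intro w
      rw [mv_dot, Matrix.transpose_transpose, mv_dot, hPT, mv_dot]
    have hsymBi : ∀ y z : Fin d → ℝ, y ⬝ᵥ (Bi *ᵥ z) = z ⬝ᵥ (Bi *ᵥ y) :=
      fun y z => dot_symm hBiT y z
    set v0 : Fin d → ℝ := (-θ) • (Sᵀ *ᵥ (M *ᵥ a)) + Λᵀ *ᵥ (Δt • (P *ᵥ b) + p) + θ • Ξ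
      with hv0def
    clear_value v0
    have hl1 : (-θ) • (Sᵀ *ᵥ (M *ᵥ a)) + Δt • (Λᵀ *ᵥ (P *ᵥ b)) + Λᵀ *ᵥ p + θ • Ξ
        = v0 := by
      rw [hv0def]
      simp only [Matrix.mulVec_add, Matrix.mulVec_smul]
      abel
    have hl2 : (-θ) • (a ᵥ* (M * S)) + Δt • (b ᵥ* (P * Λ)) + p ᵥ* Λ + θ • Ξ
        = v0 := by
      rw [hv0def]
      simp only [← Matrix.mulVec_transpose, Matrix.transpose_mul, hMT, hPT,
        ← Matrix.mulVec_mulVec, Matrix.mulVec_add, Matrix.mulVec_smul]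
      abel
    have hvv : v = v0 + ((-θ) • (Sᵀ *ᵥ (M *ᵥ (A *ᵥ x))) + Λᵀ *ᵥ (P *ᵥ (Bt *ᵥ x))) := by
      rw [hvdef, hcdef, hv0def]
      simp only [Matrix.mulVec_add, Matrix.mulVec_smul, smul_add]
      abel
    have hflip : x ⬝ᵥ (Btᵀ *ᵥ (P *ᵥ (Λ *ᵥ (Bi *ᵥ (Sᵀ *ᵥ (M *ᵥ (A *ᵥ x)))))))
        = x ⬝ᵥ (Aᵀ *ᵥ (M *ᵥ (S *ᵥ (Bi *ᵥ (Λᵀ *ᵥ (P *ᵥ (Bt *ᵥ x))))))) := by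
      rw [← hz2, hsymBi, hz1]
    rw [hl2, hl1, hvv, hcdef]
    simp only [Matrix.mulVec_add, Matrix.add_mulVec, Matrix.sub_mulVec,
      Matrix.smul_mulVec, Matrix.mulVec_smul, ← Matrix.mulVec_mulVec,
      dotProduct_add, add_dotProduct, dotProduct_sub, sub_dotProduct,
      dotProduct_smul, smul_dotProduct, smul_eq_mul, neg_mul, mul_neg, neg_neg]
    rw [dot_symm hMT a (A *ᵥ x), hsymBi v0 (Sᵀ *ᵥ (M *ᵥ (A *ᵥ x))),
      hsymBi v0 (Λᵀ *ᵥ (P *ᵥ (Bt *ᵥ x)))]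
    simp only [mv_dot, Matrix.transpose_transpose, hMT, hPT]
    rw [hflip]
    ring
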